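/- Let A be a regular subalgebra of a C*-algebra B (the normalizers of A span a dense subspace of B and A contains an approximate unit for B). If I is a normalizer-invariant closed two-sided ideal of A (nIn* ⊆ I for every normalizer n), then I is B-invariant, i.e. the closed linear span [BI] equals [IB]. -/

import Mathlib

open Pointwise

variable {B : Type*} [NonUnitalCStarAlgebra B]

/-- Closed linear span of a subset of `B`. -/
def clSpan (S : Set B) : Set B := closure (Submodule.span ℂ S : Set B)

/-- `S` is `B`-invariant if `[SB] = [BS]`. -/
def BInvariant (S : Set B) : Prop :=
  clSpan (S * (Set.univ : Set B)) = clSpan ((Set.univ : Set B) * S)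

/-- The closed two-sided ideal of `B` generated by `S`, namely `[BSB]`. -/
def idealGen (S : Set B) : Set B :=
  clSpan ((Set.univ : Set B) * S * (Set.univ : Set B))

/-- Two-sided annihilator of `S` computed in `B`. -/
def annB (S : Set B) : Set B := {x | ∀ s ∈ S, x * s = 0 ∧ s * x = 0}

/-- Two-sided annihilator of `S` computed inside the subset `A ⊆ B`. -/
def annIn (A S : Set B) : Set B := {x ∈ A | ∀ s ∈ S, x * s = 0 ∧ s * x = 0}

/-- A closed *-subalgebra of `B`, regarded as a subset. -/
structure ClosedStarSubalgebra (A : Set B) : Prop where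
  isClosed : IsClosed A
  zero_mem : (0 : B) ∈ A
  add_mem : ∀ ⦃x y : B⦄, x ∈ A → y ∈ A → x + y ∈ A
  smul_mem : ∀ (c : ℂ) ⦃x : B⦄, x ∈ A → c • x ∈ A
  mul_mem : ∀ ⦃x y : B⦄, x ∈ A → y ∈ A → x * y ∈ A
  star_mem : ∀ ⦃x : B⦄, x ∈ A → star x ∈ A

/-- A norm-closed two-sided ideal of `B`. -/
structure ClosedTwoSidedIdeal (J : Set B) : Prop where
  isClosed : IsClosed J
  zero_mem : (0 : B) ∈ J
  add_mem : ∀ ⦃x y : B⦄, x ∈ J → y ∈ J → x + y ∈ J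
  smul_mem : ∀ (c : ℂ) ⦃x : B⦄, x ∈ J → c • x ∈ J
  mul_mem_left : ∀ (a : B) ⦃x : B⦄, x ∈ J → a * x ∈ J
  mul_mem_right : ∀ (a : B) ⦃x : B⦄, x ∈ J → x * a ∈ J

/-- A norm-closed two-sided ideal of the subalgebra `A ⊆ B`. -/
structure IdealOf (A J : Set B) : Prop where
  subset : J ⊆ A
  isClosed : IsClosed J
  zero_mem : (0 : B) ∈ J
  add_mem : ∀ ⦃x y : B⦄, x ∈ J → y ∈ J → x + y ∈ J
  smul_mem : ∀ (c : ℂ) ⦃x : B⦄, x ∈ J → c • x ∈ J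
  mul_mem_left : ∀ ⦃a : B⦄, a ∈ A → ∀ ⦃x : B⦄, x ∈ J → a * x ∈ J
  mul_mem_right : ∀ ⦃a : B⦄, a ∈ A → ∀ ⦃x : B⦄, x ∈ J → x * a ∈ J

/-- The ideal intersection property: every nonzero closed two-sided ideal of `B`
meets `A` nontrivially. -/
def IdealIntersectionProperty (A : Set B) : Prop :=
  ∀ J : Set B, ClosedTwoSidedIdeal J → J ≠ {0} → J ∩ A ≠ {0}

/-- Axiom (inv): `J ∩ A` is `B`-invariant for every closed two-sided ideal `J` of `B`. -/
def AxiomInv (A : Set B) : Prop :=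
  ∀ J : Set B, ClosedTwoSidedIdeal J → BInvariant (J ∩ A)

/-- A regular ideal of `B`. -/
def RegularIdealB (J : Set B) : Prop :=
  ClosedTwoSidedIdeal J ∧ annB (annB J) = J

/-- A regular ideal of the subalgebra `A`. -/
def RegularIdealIn (A I : Set B) : Prop :=
  IdealOf A I ∧ annIn A (annIn A I) = I

/-- A normalizer of `A` in `B`. -/
def IsNormalizer (A : Set B) (n : B) : Prop :=
  (∀ a ∈ A, star n * a * n ∈ A) ∧ (∀ a ∈ A, n * a * star n ∈ A)

/-- `A` contains an approximate unit for `B`. -/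
def ContainsApproxUnit (A : Set B) : Prop :=
  ∃ (ι : Type) (l : Filter ι) (e : ι → B), l.NeBot ∧ (∀ i, e i ∈ A) ∧
    ∀ b : B, Filter.Tendsto (fun i => e i * b) l (nhds b) ∧
      Filter.Tendsto (fun i => b * e i) l (nhds b)

/-- `A` is a regular subalgebra of `B`: the normalizers span a dense subspace of
`B` and `A` contains an approximate unit for `B`. -/
def RegularSubalgebra (A : Set B) : Prop :=
  ClosedStarSubalgebra A ∧ clSpan {n : B | IsNormalizer A n} = Set.univ ∧
    ContainsApproxUnit A


open scoped ContinuousMapZero in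
/-- Continuous functional calculus of a self-adjoint element of a closed subalgebra-like
subset stays in the subset. -/
lemma cfcn_mem_aux {I : Set B} (hcl : IsClosed I)
    (hadd : ∀ ⦃x y : B⦄, x ∈ I → y ∈ I → x + y ∈ I)
    (hsmul : ∀ (c : ℂ) ⦃x : B⦄, x ∈ I → c • x ∈ I)
    (hmul : ∀ ⦃x y : B⦄, x ∈ I → y ∈ I → x * y ∈ I)
    {a : B} (haI : a ∈ I) (hsa : IsSelfAdjoint a)
    {f : ℝ → ℝ} (hf : Continuous f) (hf0 : f 0 = 0) :
    cfcₙ f a ∈ I := by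
  have h0 : ((0 : quasispectrum ℝ a) : ℝ) = 0 := rfl
  have hzero : (0 : B) ∈ I := by simpa using hsmul 0 haI
  have key : ∀ g : C(quasispectrum ℝ a, ℝ)₀, cfcₙHom hsa g ∈ I := by
    intro g
    induction g using ContinuousMapZero.induction_on_of_compact with
    | zero => simpa using hzero
    | id =>
      have hid : cfcₙHom hsa (ContinuousMapZero.id (quasispectrum ℝ a)) = a := cfcₙHom_id hsa
      rw [hid]; exact haI
    | star_id =>
      have hstar : star (ContinuousMapZero.id (quasispectrum ℝ a)) = ContinuousMapZero.id (quasispectrum ℝ a) := by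
        ext x; exact star_trivial _
      rw [hstar]
      have hid : cfcₙHom hsa (ContinuousMapZero.id (quasispectrum ℝ a)) = a := cfcₙHom_id hsa
      rw [hid]; exact haI
    | add f g hf hg => rw [map_add]; exact hadd hf hg
    | mul f g hf hg => rw [map_mul]; exact hmul hf hg
    | smul r f hf =>
      rw [map_smul, ← algebraMap_smul ℂ r (cfcₙHom hsa f)]
      exact hsmul _ hf
    | frequently f hfreq =>
      exact hfreq.mem_of_closed (hcl.preimage (cfcₙHom_isClosedEmbedding hsa).continuous)
  rw [cfcₙ_apply f a hf.continuousOn hf0 hsa]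
  exact key _

/-- For a self-adjoint element of `I` there is an approximate square-ish unit in `I`. -/
lemma exists_approx_unit_aux {I : Set B} (hcl : IsClosed I)
    (hadd : ∀ ⦃x y : B⦄, x ∈ I → y ∈ I → x + y ∈ I)
    (hsmul : ∀ (c : ℂ) ⦃x : B⦄, x ∈ I → c • x ∈ I)
    (hmul : ∀ ⦃x y : B⦄, x ∈ I → y ∈ I → x * y ∈ I)
    {a : B} (haI : a ∈ I) (hsa : IsSelfAdjoint a)
    {DELTA : ℝ} (hDELTA : 0 < DELTA) :
    ∃ c ∈ I, IsSelfAdjoint c ∧ ‖a - a * c - (c * a - c * (a * c))‖ ≤ DELTA := by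
  set g : ℝ → ℝ := fun t => min (|t| / DELTA) 1 with hgdef
  have hgc : Continuous g := (continuous_abs.div_const DELTA).min continuous_const
  have hg0 : g 0 = 0 := by simp [hgdef]
  have hg0' : (fun t : ℝ => t * g t) 0 = 0 := by simp [hg0]
  have hgcont : ContinuousOn g (quasispectrum ℝ a) := hgc.continuousOn
  have htg : ContinuousOn (fun t : ℝ => t * g t) (quasispectrum ℝ a) :=
    (continuous_id.mul hgc).continuousOn
  have hgt : ContinuousOn (fun t : ℝ => g t * t) (quasispectrum ℝ a) :=
    (hgc.mul continuous_id).continuousOn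
  have hgt0 : (fun t : ℝ => g t * t) 0 = 0 := by simp [hg0]
  have hgtg : ContinuousOn (fun t : ℝ => g t * (t * g t)) (quasispectrum ℝ a) :=
    (hgc.mul (continuous_id.mul hgc)).continuousOn
  have hgtg0 : (fun t : ℝ => g t * (t * g t)) 0 = 0 := by simp [hg0]
  have hidc : ContinuousOn (fun t : ℝ => t) (quasispectrum ℝ a) := continuousOn_id
  have hid0 : (fun t : ℝ => t) 0 = 0 := rfl
  refine ⟨cfcₙ g a, cfcn_mem_aux hcl hadd hsmul hmul haI hsa hgc hg0, cfcₙ_predicate g a, ?_⟩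
  set c : B := cfcₙ g a with hcdef
  have h_ac : cfcₙ (fun t : ℝ => t * g t) a = a * c := by
    rw [cfcₙ_mul (fun t : ℝ => t) g a hidc hid0 hgcont hg0, cfcₙ_id' ℝ a hsa]
  have h_ca : cfcₙ (fun t : ℝ => g t * t) a = c * a := by
    rw [cfcₙ_mul g (fun t : ℝ => t) a hgcont hg0 hidc hid0, cfcₙ_id' ℝ a hsa]
  have h_cac : cfcₙ (fun t : ℝ => g t * (t * g t)) a = c * (a * c) := by
    rw [cfcₙ_mul g (fun t : ℝ => t * g t) a hgcont hg0 htg hg0', h_ac]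
  have hsum : a - a * c - (c * a - c * (a * c))
      = cfcₙ (fun t : ℝ => (t - t * g t) - (g t * t - g t * (t * g t))) a := by
    rw [cfcₙ_sub (fun t : ℝ => t - t * g t) (fun t : ℝ => g t * t - g t * (t * g t)) a
        (hidc.sub htg) (by simp [hg0]) (hgt.sub hgtg) (by simp [hg0]),
      cfcₙ_sub (fun t : ℝ => t) (fun t : ℝ => t * g t) a hidc hid0 htg hg0',
      cfcₙ_sub (fun t : ℝ => g t * t) (fun t : ℝ => g t * (t * g t)) a hgt hgt0 hgtg hgtg0,
      h_ac, h_ca, h_cac, cfcₙ_id' ℝ a hsa]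
  rw [hsum]
  refine norm_cfcₙ_le fun t _ => ?_
  have heq : (t - t * g t) - (g t * t - g t * (t * g t)) = t * (1 - g t) ^ 2 := by ring
  rw [heq]
  rcases le_or_gt (|t|) DELTA with hle | hlt
  · have hg_nonneg : 0 ≤ g t := le_min (by positivity) zero_le_one
    have hg_le_one : g t ≤ 1 := min_le_right _ _
    have habs : |1 - g t| ≤ 1 := by rw [abs_le]; constructor <;> linarith
    calc ‖t * (1 - g t) ^ 2‖ = |t| * |1 - g t| ^ 2 := by
          rw [Real.norm_eq_abs, abs_mul, abs_pow]
      _ ≤ DELTA * 1 := by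
          apply mul_le_mul hle ?_ (by positivity) hDELTA.le
          calc |1 - g t| ^ 2 ≤ 1 ^ 2 := by
                apply pow_le_pow_left₀ (abs_nonneg _) habs
            _ = 1 := one_pow 2
      _ = DELTA := mul_one DELTA
  · have hg_one : g t = 1 := by
      apply min_eq_right
      rw [le_div_iff₀ hDELTA]
      simpa using hlt.le
    simp [hg_one, hDELTA.le]

/-- If `star b * b ∈ I` then `b` lies in the closed span of `B * I`. -/
lemma mem_clSpan_univ_mul {I : Set B} (hcl : IsClosed I)
    (hadd : ∀ ⦃x y : B⦄, x ∈ I → y ∈ I → x + y ∈ I)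
    (hsmul : ∀ (c : ℂ) ⦃x : B⦄, x ∈ I → c • x ∈ I)
    (hmul : ∀ ⦃x y : B⦄, x ∈ I → y ∈ I → x * y ∈ I)
    (b : B) (hb : star b * b ∈ I) :
    b ∈ closure ((Submodule.span ℂ ((Set.univ : Set B) * I) : Submodule ℂ B) : Set B) := by
  rw [Metric.mem_closure_iff]
  intro eps heps
  have hsa : IsSelfAdjoint (star b * b) := by
    rw [IsSelfAdjoint, star_mul, star_star]
  have hDELTA : (0 : ℝ) < eps ^ 2 / 2 := by positivity
  obtain ⟨c, hcI, hcsa, hest⟩ := exists_approx_unit_aux hcl hadd hsmul hmul hb hsa hDELTA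
  refine ⟨b * c, Submodule.subset_span (Set.mul_mem_mul (Set.mem_univ b) hcI), ?_⟩
  rw [dist_eq_norm]
  set d : B := b - b * c with hddef
  have hexp : star d * d = star b * b - star b * b * c
      - (c * (star b * b) - c * (star b * b * c)) := by
    rw [hddef, star_sub, star_mul, hcsa.star_eq]
    noncomm_ring
  have hnorm2 : ‖d‖ * ‖d‖ ≤ eps ^ 2 / 2 := by
    rw [← CStarRing.norm_star_mul_self, hexp]
    have : star b * b * c = star b * b * c := rfl
    calc ‖star b * b - star b * b * c - (c * (star b * b) - c * (star b * b * c))‖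
        = ‖star b * b - (star b * b) * c
            - (c * (star b * b) - c * ((star b * b) * c))‖ := by rw [mul_assoc]
      _ ≤ eps ^ 2 / 2 := hest
  nlinarith [norm_nonneg d, heps]

/-- If `b * star b ∈ I` then `b` lies in the closed span of `I * B`. -/
lemma mem_clSpan_mul_univ {I : Set B} (hcl : IsClosed I)
    (hadd : ∀ ⦃x y : B⦄, x ∈ I → y ∈ I → x + y ∈ I)
    (hsmul : ∀ (c : ℂ) ⦃x : B⦄, x ∈ I → c • x ∈ I)
    (hmul : ∀ ⦃x y : B⦄, x ∈ I → y ∈ I → x * y ∈ I)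
    (b : B) (hb : b * star b ∈ I) :
    b ∈ closure ((Submodule.span ℂ (I * (Set.univ : Set B)) : Submodule ℂ B) : Set B) := by
  rw [Metric.mem_closure_iff]
  intro eps heps
  have hsa : IsSelfAdjoint (b * star b) := by
    rw [IsSelfAdjoint, star_mul, star_star]
  have hDELTA : (0 : ℝ) < eps ^ 2 / 2 := by positivity
  obtain ⟨c, hcI, hcsa, hest⟩ := exists_approx_unit_aux hcl hadd hsmul hmul hb hsa hDELTA
  refine ⟨c * b, Submodule.subset_span (Set.mul_mem_mul hcI (Set.mem_univ b)), ?_⟩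
  rw [dist_eq_norm]
  set d : B := b - c * b with hddef
  have hexp : d * star d = b * star b - (b * star b) * c
      - (c * (b * star b) - c * ((b * star b) * c)) := by
    rw [hddef, star_sub, star_mul, hcsa.star_eq]
    noncomm_ring
  have hnorm2 : ‖d‖ * ‖d‖ ≤ eps ^ 2 / 2 := by
    rw [← CStarRing.norm_self_mul_star, hexp]
    exact hest
  nlinarith [norm_nonneg d, heps]

lemma IsNormalizer.star_aux {A : Set B} {n : B} (h : IsNormalizer A n) :
    IsNormalizer A (star n) := by
  refine ⟨fun a ha => ?_, fun a ha => ?_⟩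
  · simpa [star_star] using h.2 a ha
  · simpa [star_star] using h.1 a ha

/-- If `A` is a regular subalgebra of `B`, then every normalizer-invariant
closed two-sided ideal of `A` is `B`-invariant. -/
theorem stmt15 (A : Set B) (hreg : RegularSubalgebra A)
    (I : Set B) (hI : IdealOf A I)
    (hnorm : ∀ n : B, IsNormalizer A n → ∀ x ∈ I, n * x * star n ∈ I) :
    BInvariant I := by
  obtain ⟨hA, hdense, -⟩ := hreg
  have hcl := hI.isClosed
  have hadd := hI.add_mem
  have hsmul := hI.smul_mem
  have hmulI : ∀ ⦃x y : B⦄, x ∈ I → y ∈ I → x * y ∈ I :=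
    fun x y hx hy => hI.mul_mem_left (hI.subset hx) hy
  set M1 : Submodule ℂ B := (Submodule.span ℂ ((Set.univ : Set B) * I)).topologicalClosure
    with hM1
  set M2 : Submodule ℂ B := (Submodule.span ℂ (I * (Set.univ : Set B))).topologicalClosure
    with hM2
  have hM1coe : (M1 : Set B) = clSpan ((Set.univ : Set B) * I) :=
    Submodule.topologicalClosure_coe _
  have hM2coe : (M2 : Set B) = clSpan (I * (Set.univ : Set B)) :=
    Submodule.topologicalClosure_coe _
  have hM1closed : IsClosed (M1 : Set B) := Submodule.isClosed_topologicalClosure _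
  have hM2closed : IsClosed (M2 : Set B) := Submodule.isClosed_topologicalClosure _
  -- Step A: for a normalizer n and x ∈ I, x * n ∈ M1 and n * x ∈ M2.
  have stepA1 : ∀ x ∈ I, ∀ n : B, IsNormalizer A n → x * n ∈ M1 := by
    intro x hx n hn
    have hxx : star x * x ∈ I := hI.mul_mem_left (hA.star_mem (hI.subset hx)) hx
    have h1 : star n * (star x * x) * star (star n) ∈ I :=
      hnorm (star n) hn.star_aux _ hxx
    rw [star_star] at h1
    have h2 : star (x * n) * (x * n) = star n * (star x * x) * n := by
      rw [star_mul]; noncomm_ring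
    have := mem_clSpan_univ_mul hcl hadd hsmul hmulI (x * n) (h2 ▸ h1)
    rwa [← Submodule.topologicalClosure_coe] at this
  have stepA2 : ∀ x ∈ I, ∀ n : B, IsNormalizer A n → n * x ∈ M2 := by
    intro x hx n hn
    have hxx : x * star x ∈ I := hI.mul_mem_right (hA.star_mem (hI.subset hx)) hx
    have h1 : n * (x * star x) * star n ∈ I := hnorm n hn _ hxx
    have h2 : (n * x) * star (n * x) = n * (x * star x) * star n := by
      rw [star_mul]; noncomm_ring
    have := mem_clSpan_mul_univ hcl hadd hsmul hmulI (n * x) (h2 ▸ h1)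
    rwa [← Submodule.topologicalClosure_coe] at this
  -- Step B: for x ∈ I and any b ∈ B, x * b ∈ M1 and b * x ∈ M2.
  have stepB1 : ∀ x ∈ I, ∀ b : B, x * b ∈ M1 := by
    intro x hx b
    have hTclosed : IsClosed {b : B | x * b ∈ M1} :=
      hM1closed.preimage (continuous_const.mul continuous_id)
    have hspan : (Submodule.span ℂ {n : B | IsNormalizer A n} : Set B)
        ⊆ {b : B | x * b ∈ M1} := by
      intro y hy
      have hle : Submodule.span ℂ {n : B | IsNormalizer A n}
          ≤ M1.comap (LinearMap.mulLeft ℂ x) := by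
        rw [Submodule.span_le]
        intro n hn
        exact stepA1 x hx n hn
      exact hle hy
    have hcls : closure ((Submodule.span ℂ {n : B | IsNormalizer A n} : Submodule ℂ B) : Set B)
        ⊆ {b : B | x * b ∈ M1} := closure_minimal hspan hTclosed
    have hb : b ∈ closure ((Submodule.span ℂ {n : B | IsNormalizer A n} : Submodule ℂ B) : Set B) := by
      have : b ∈ clSpan {n : B | IsNormalizer A n} := by rw [hdense]; trivial
      exact this
    exact hcls hb
  have stepB2 : ∀ x ∈ I, ∀ b : B, b * x ∈ M2 := by
    intro x hx b
    have hTclosed : IsClosed {b : B | b * x ∈ M2} :=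
      hM2closed.preimage (continuous_id.mul continuous_const)
    have hspan : (Submodule.span ℂ {n : B | IsNormalizer A n} : Set B)
        ⊆ {b : B | b * x ∈ M2} := by
      intro y hy
      have hle : Submodule.span ℂ {n : B | IsNormalizer A n}
          ≤ M2.comap (LinearMap.mulRight ℂ x) := by
        rw [Submodule.span_le]
        intro n hn
        exact stepA2 x hx n hn
      exact hle hy
    have hcls : closure ((Submodule.span ℂ {n : B | IsNormalizer A n} : Submodule ℂ B) : Set B)
        ⊆ {b : B | b * x ∈ M2} := closure_minimal hspan hTclosed
    have hb : b ∈ closure ((Submodule.span ℂ {n : B | IsNormalizer A n} : Submodule ℂ B) : Set B) := by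
      have : b ∈ clSpan {n : B | IsNormalizer A n} := by rw [hdense]; trivial
      exact this
    exact hcls hb
  -- Conclusion
  apply Set.Subset.antisymm
  · -- clSpan (I * univ) ⊆ clSpan (univ * I)
    rw [← hM1coe]
    apply closure_minimal ?_ hM1closed
    rw [show ((Submodule.span ℂ (I * (Set.univ : Set B)) : Submodule ℂ B) : Set B)
        ⊆ (M1 : Set B) ↔ Submodule.span ℂ (I * (Set.univ : Set B)) ≤ M1 from Iff.rfl]
    rw [Submodule.span_le]
    rintro y ⟨x, hx, b, -, rfl⟩
    exact stepB1 x hx b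
  · rw [← hM2coe]
    apply closure_minimal ?_ hM2closed
    rw [show ((Submodule.span ℂ ((Set.univ : Set B) * I) : Submodule ℂ B) : Set B)
        ⊆ (M2 : Set B) ↔ Submodule.span ℂ ((Set.univ : Set B) * I) ≤ M2 from Iff.rfl]
    rw [Submodule.span_le]
    rintro y ⟨b, -, x, hx, rfl⟩
    exact stepB2 x hx b
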